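/- arXiv:2504.03926 — 2 statements merged into one kernel-verified Lean document; each statement's English description precedes it below -/
import Mathlib

section
/- For a random vector z = ẑ + e in R^d with ẑ fixed nonzero, E[e] = 0, E[‖e‖²] = tr(P), and θ the angle between z and ẑ (assume z ≠ 0 a.s.), one has the inequality ‖ẑ‖² / (‖ẑ‖² + tr(P)) ≤ E[(1 + cos 2θ)/2], where cos θ = ⟨z, ẑ⟩/(‖z‖‖ẑ‖). -/
open MeasureTheory Matrix

lemma dot_self_nonneg' {d : ℕ} (v : Fin d → ℝ) : 0 ≤ v ⬝ᵥ v :=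
  Finset.sum_nonneg fun i _ => mul_self_nonneg (v i)

/-- For `z = ẑ + e` with `ẑ` fixed nonzero, `E[e] = 0`, `E[‖e‖²] = tr P`, and `θ`
the angle between `z` and `ẑ`, one has
`‖ẑ‖² / (‖ẑ‖² + tr P) ≤ E[(1 + cos 2θ)/2]`. -/
theorem angle_cos_lower_bound
    {Ω : Type*} [MeasurableSpace Ω] (μ : Measure Ω) [IsProbabilityMeasure μ]
    {d : ℕ} (zhat : Fin d → ℝ) (hzhat : zhat ≠ 0)
    (e : Ω → Fin d → ℝ) (he : Measurable e)
    (z : Ω → Fin d → ℝ) (hz : ∀ ω, z ω = zhat + e ω)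
    (hz_ne : ∀ᵐ ω ∂μ, z ω ≠ 0)
    (P : Matrix (Fin d) (Fin d) ℝ)
    (h_mean : ∀ i, Integrable (fun ω => e ω i) μ ∧ ∫ ω, e ω i ∂μ = 0)
    (h_int_sq : Integrable (fun ω => e ω ⬝ᵥ e ω) μ)
    (h_cov : ∫ ω, e ω ⬝ᵥ e ω ∂μ = P.trace)
    (θ : Ω → ℝ)
    (hθ : ∀ ω, θ ω = Real.arccos
      ((z ω ⬝ᵥ zhat) / (Real.sqrt (z ω ⬝ᵥ z ω) * Real.sqrt (zhat ⬝ᵥ zhat)))) :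
    (zhat ⬝ᵥ zhat) / (zhat ⬝ᵥ zhat + P.trace)
      ≤ ∫ ω, (1 + Real.cos (2 * θ ω)) / 2 ∂μ := by
  set A : ℝ := zhat ⬝ᵥ zhat with hA_def
  set T : ℝ := P.trace with hT_def
  have hA : 0 < A := by
    rcases lt_or_eq_of_le (dot_self_nonneg' zhat) with h | h
    · exact h
    · exact absurd (dotProduct_self_eq_zero.mp h.symm) hzhat
  have hT : 0 ≤ T := by
    rw [← h_cov]
    exact integral_nonneg fun ω => dot_self_nonneg' (e ω)
  have hAT : 0 < A + T := by linarith
  set lam : ℝ := (A + T)⁻¹ with hlam_def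
  -- integrability and integral of e ⬝ᵥ zhat
  have h_edot_int : Integrable (fun ω => e ω ⬝ᵥ zhat) μ := by
    simp only [dotProduct]
    exact integrable_finset_sum _ fun i _ => (h_mean i).1.mul_const (zhat i)
  have h_edot_val : ∫ ω, e ω ⬝ᵥ zhat ∂μ = 0 := by
    simp only [dotProduct]
    rw [integral_finset_sum _ fun i _ => (h_mean i).1.mul_const (zhat i)]
    simp only [integral_mul_const]
    simp [(fun i => (h_mean i).2)]
  -- expansion of z ⬝ᵥ z
  have h_zz_expand : ∀ ω, z ω ⬝ᵥ z ω = A + 2 * (e ω ⬝ᵥ zhat) + e ω ⬝ᵥ e ω := by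
    intro ω
    rw [hz ω, add_dotProduct, dotProduct_add, dotProduct_add, dotProduct_comm zhat (e ω)]
    ring
  have h_zdot_expand : ∀ ω, z ω ⬝ᵥ zhat = A + e ω ⬝ᵥ zhat := by
    intro ω; rw [hz ω, add_dotProduct]
  have h_zz_int : Integrable (fun ω => z ω ⬝ᵥ z ω) μ := by
    have : (fun ω => z ω ⬝ᵥ z ω)
        = fun ω => A + 2 * (e ω ⬝ᵥ zhat) + e ω ⬝ᵥ e ω := funext h_zz_expand
    rw [this]
    exact ((integrable_const A).add (h_edot_int.const_mul 2)).add h_int_sq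
  have h_zz_val : ∫ ω, z ω ⬝ᵥ z ω ∂μ = A + T := by
    have h1 : Integrable (fun ω => A + 2 * (e ω ⬝ᵥ zhat)) μ :=
      (integrable_const A).add (h_edot_int.const_mul 2)
    simp only [h_zz_expand]
    rw [integral_add h1 h_int_sq, integral_add (integrable_const A) (h_edot_int.const_mul 2),
      integral_const, integral_const_mul, h_edot_val, h_cov]
    simp
  have h_zdot_int : Integrable (fun ω => z ω ⬝ᵥ zhat) μ := by
    have : (fun ω => z ω ⬝ᵥ zhat) = fun ω => A + e ω ⬝ᵥ zhat := funext h_zdot_expand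
    rw [this]
    exact (integrable_const A).add h_edot_int
  have h_zdot_val : ∫ ω, z ω ⬝ᵥ zhat ∂μ = A := by
    simp only [h_zdot_expand]
    rw [integral_add (integrable_const A) h_edot_int, h_edot_val, integral_const]
    simp
  -- key identity: √(z⬝z) * √A * cos θ = z ⬝ᵥ zhat
  have key : ∀ ω, Real.sqrt (z ω ⬝ᵥ z ω) * Real.sqrt A * Real.cos (θ ω)
      = z ω ⬝ᵥ zhat := by
    intro ω
    have hzz : 0 ≤ z ω ⬝ᵥ z ω := dot_self_nonneg' (z ω)
    by_cases hs : Real.sqrt (z ω ⬝ᵥ z ω) = 0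
    · have hzz0 : z ω ⬝ᵥ z ω = 0 := by
        have := Real.sqrt_eq_zero hzz |>.mp hs
        exact this
      have hz0 : z ω = 0 := dotProduct_self_eq_zero.mp hzz0
      simp [hs, hz0]
    · have hcs : (z ω ⬝ᵥ zhat) ^ 2 ≤ (z ω ⬝ᵥ z ω) * A := by
        have := Finset.sum_mul_sq_le_sq_mul_sq Finset.univ (z ω) zhat
        simpa [dotProduct, sq, mul_pow, hA_def] using this
      have habs : |z ω ⬝ᵥ zhat| ≤ Real.sqrt (z ω ⬝ᵥ z ω) * Real.sqrt A := by
        rw [← Real.sqrt_mul hzz]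
        rw [← Real.sqrt_sq_eq_abs]
        exact Real.sqrt_le_sqrt hcs
      have hden : Real.sqrt (z ω ⬝ᵥ z ω) * Real.sqrt A ≠ 0 := by
        apply mul_ne_zero hs
        exact ne_of_gt (Real.sqrt_pos.mpr hA)
      have hdenpos : 0 < Real.sqrt (z ω ⬝ᵥ z ω) * Real.sqrt A := by
        rcases (mul_nonneg (Real.sqrt_nonneg _) (Real.sqrt_nonneg _)).lt_or_eq with h | h
        · exact h
        · exact absurd h.symm hden
      have hr1 : -1 ≤ (z ω ⬝ᵥ zhat) / (Real.sqrt (z ω ⬝ᵥ z ω) * Real.sqrt A) := by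
        rw [le_div_iff₀ hdenpos]
        have := neg_abs_le (z ω ⬝ᵥ zhat)
        linarith [habs]
      have hr2 : (z ω ⬝ᵥ zhat) / (Real.sqrt (z ω ⬝ᵥ z ω) * Real.sqrt A) ≤ 1 := by
        rw [div_le_iff₀ hdenpos]
        have := le_abs_self (z ω ⬝ᵥ zhat)
        linarith [habs]
      rw [hθ ω, Real.cos_arccos hr1 hr2, mul_div_cancel₀ _ hden]
  -- measurability of cos θ
  have hz_meas : Measurable z := by
    have : z = fun ω => zhat + e ω := funext hz
    rw [this]; exact measurable_const.add he
  have h_zz_meas : Measurable fun ω => z ω ⬝ᵥ z ω := by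
    simp only [dotProduct]
    exact Finset.measurable_sum _ fun i _ =>
      ((hz_meas.eval (a := i)).mul (hz_meas.eval (a := i)))
  have h_zdot_meas : Measurable fun ω => z ω ⬝ᵥ zhat := by
    simp only [dotProduct]
    exact Finset.measurable_sum _ fun i _ => (hz_meas.eval (a := i)).mul measurable_const
  have hθ_meas : Measurable θ := by
    have : θ = fun ω => Real.arccos
        ((z ω ⬝ᵥ zhat) / (Real.sqrt (z ω ⬝ᵥ z ω) * Real.sqrt A)) := funext hθ
    rw [this]
    exact Real.continuous_arccos.measurable.comp
      (h_zdot_meas.div ((h_zz_meas.sqrt).mul measurable_const))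
  have hcos2_int : Integrable (fun ω => Real.cos (θ ω) ^ 2) μ := by
    refine ⟨((Real.continuous_cos.measurable.comp hθ_meas).pow_const 2).aestronglyMeasurable, ?_⟩
    apply HasFiniteIntegral.of_bounded (C := 1)
    filter_upwards with ω
    rw [Real.norm_eq_abs, abs_of_nonneg (sq_nonneg _)]
    calc Real.cos (θ ω) ^ 2 ≤ 1 ^ 2 := by
          apply sq_le_sq'
          · linarith [Real.neg_one_le_cos (θ ω)]
          · exact Real.cos_le_one _
      _ = 1 := one_pow 2
  -- pointwise inequality
  have h_pt : ∀ ω, 2 * lam * (z ω ⬝ᵥ zhat) - lam ^ 2 * A * (z ω ⬝ᵥ z ω)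
      ≤ Real.cos (θ ω) ^ 2 := by
    intro ω
    have hzz : 0 ≤ z ω ⬝ᵥ z ω := dot_self_nonneg' (z ω)
    have hs2 : Real.sqrt (z ω ⬝ᵥ z ω) ^ 2 = z ω ⬝ᵥ z ω := Real.sq_sqrt hzz
    have hA2 : Real.sqrt A ^ 2 = A := Real.sq_sqrt hA.le
    have h0 := sq_nonneg (Real.cos (θ ω) - lam * (Real.sqrt (z ω ⬝ᵥ z ω) * Real.sqrt A))
    have hexp : (Real.cos (θ ω) - lam * (Real.sqrt (z ω ⬝ᵥ z ω) * Real.sqrt A)) ^ 2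
        = Real.cos (θ ω) ^ 2
          - 2 * lam * (Real.sqrt (z ω ⬝ᵥ z ω) * Real.sqrt A * Real.cos (θ ω))
          + lam ^ 2 * (Real.sqrt (z ω ⬝ᵥ z ω) ^ 2 * Real.sqrt A ^ 2) := by ring
    rw [hexp, key ω, hs2, hA2] at h0
    linarith
  -- integrate
  have h_lhs_int : Integrable
      (fun ω => 2 * lam * (z ω ⬝ᵥ zhat) - lam ^ 2 * A * (z ω ⬝ᵥ z ω)) μ :=
    (h_zdot_int.const_mul _).sub (h_zz_int.const_mul _)
  have h_int_le : ∫ ω, (2 * lam * (z ω ⬝ᵥ zhat) - lam ^ 2 * A * (z ω ⬝ᵥ z ω)) ∂μ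
      ≤ ∫ ω, Real.cos (θ ω) ^ 2 ∂μ :=
    integral_mono h_lhs_int hcos2_int h_pt
  have h_lhs_val : ∫ ω, (2 * lam * (z ω ⬝ᵥ zhat) - lam ^ 2 * A * (z ω ⬝ᵥ z ω)) ∂μ
      = 2 * lam * A - lam ^ 2 * A * (A + T) := by
    rw [integral_sub (h_zdot_int.const_mul _) (h_zz_int.const_mul _),
      integral_const_mul, integral_const_mul, h_zdot_val, h_zz_val]
  have h_eq : ∫ ω, (1 + Real.cos (2 * θ ω)) / 2 ∂μ = ∫ ω, Real.cos (θ ω) ^ 2 ∂μ := by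
    apply integral_congr_ae
    filter_upwards with ω
    rw [Real.cos_sq]
    ring
  rw [h_eq]
  have : A / (A + T) = 2 * lam * A - lam ^ 2 * A * (A + T) := by
    rw [hlam_def]
    field_simp
    ring
  rw [this]
  rw [← h_lhs_val]
  exact h_int_le
end

section
/- Combining the previous two facts: for z = ẑ + e with ẑ fixed nonzero, E[e]=0, E[‖e‖²] = tr(P), and angle θ ∈ [0, π/4] between z and ẑ, we have E[θ] ≤ (1/2) arccos( 2‖ẑ‖² / (‖ẑ‖² + tr(P)) − 1 ), provided the argument of arccos lies in [−1, 1]. -/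
open MeasureTheory Matrix

open Real

lemma aux_mul_cos_le_sin {t : ℝ} (h0 : 0 ≤ t) (h1 : t ≤ π / 2) :
    t * Real.cos t ≤ Real.sin t := by
  rcases eq_or_lt_of_le h0 with h | h0'
  · simp [← h]
  rcases eq_or_lt_of_le h1 with h | h1'
  · rw [h]; simp
  · have ht := Real.lt_tan h0' h1'
    rw [Real.tan_eq_sin_div_cos] at ht
    have hc : 0 < Real.cos t := Real.cos_pos_of_mem_Ioo ⟨by linarith [Real.pi_pos], h1'⟩
    exact ((lt_div_iff₀ hc).mp ht).le

lemma aux_cos_tangent {a b : ℝ} (ha0 : 0 ≤ a) (ha1 : a ≤ π / 2)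
    (hb0 : 0 ≤ b) (hb1 : b ≤ π / 2) :
    Real.cos a ≤ Real.cos b + (b - a) * Real.sin b := by
  have hab : a = b + (a - b) := by ring
  have hkey : Real.cos a = Real.cos b * Real.cos (a - b) - Real.sin b * Real.sin (a - b) := by
    rw [hab, Real.cos_add]; ring_nf
  set t := a - b with htdef
  have hcb : 0 ≤ Real.cos b := Real.cos_nonneg_of_mem_Icc ⟨by linarith, hb1⟩
  have hsb : 0 ≤ Real.sin b := Real.sin_nonneg_of_nonneg_of_le_pi hb0 (by linarith [Real.pi_pos])
  rcases le_or_gt t 0 with ht | ht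
  · have h1 : Real.cos t ≤ 1 := Real.cos_le_one t
    have h2 : t ≤ Real.sin t := Real.le_sin ht
    nlinarith
  · have ht2 : t ≤ π / 2 := by simp only [htdef]; linarith
    have h1 : t * Real.cos t ≤ Real.sin t := aux_mul_cos_le_sin ht.le ht2
    have h2 : Real.sin t ≤ t := Real.sin_le ht.le
    have h3 : Real.cos t ≤ 1 := Real.cos_le_one t
    have h4 : 0 ≤ Real.cos t := Real.cos_nonneg_of_mem_Icc ⟨by linarith, ht2⟩
    have h5 : Real.sin b ≤ Real.cos t := by
      have : Real.sin b ≤ Real.sin (π / 2 - t) := by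
        apply Real.sin_le_sin_of_le_of_le_pi_div_two (by linarith) (by linarith)
        linarith
      rwa [Real.sin_pi_div_two_sub] at this
    have h6 : Real.sin t ≤ Real.cos b := by
      have : Real.cos (π / 2 - t) ≤ Real.cos b := by
        apply Real.cos_le_cos_of_nonneg_of_le_pi hb0 (by linarith [Real.pi_pos]) (by linarith)
      rwa [Real.cos_pi_div_two_sub] at this
    nlinarith [mul_le_mul_of_nonneg_right h5 (by linarith : (0:ℝ) ≤ t - Real.sin t),
      mul_le_mul_of_nonneg_right h6 (by linarith : (0:ℝ) ≤ 1 - Real.cos t)]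

lemma aux_arccos_tangent {x m : ℝ} (hx0 : 0 ≤ x) (hx1 : x ≤ 1) (hm0 : 0 < m) (hm1 : m < 1) :
    Real.arccos x ≤ Real.arccos m + (m - x) / Real.sqrt (1 - m ^ 2) := by
  set a := Real.arccos x with hadf
  set b := Real.arccos m with hbdf
  have ha0 : 0 ≤ a := Real.arccos_nonneg x
  have ha1 : a ≤ π / 2 := Real.arccos_le_pi_div_two.mpr hx0
  have hb0 : 0 ≤ b := Real.arccos_nonneg m
  have hb1 : b ≤ π / 2 := Real.arccos_le_pi_div_two.mpr hm0.le
  have hca : Real.cos a = x := Real.cos_arccos (by linarith) hx1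
  have hcb : Real.cos b = m := Real.cos_arccos (by linarith) hm1.le
  have hsb : Real.sin b = Real.sqrt (1 - m ^ 2) := by rw [hbdf, Real.sin_arccos]
  have hsbpos : 0 < Real.sin b := by
    apply Real.sin_pos_of_pos_of_lt_pi
    · rw [hbdf]; exact Real.arccos_pos.mpr hm1
    · linarith [Real.pi_pos]
  have key := aux_cos_tangent ha0 ha1 hb0 hb1
  rw [hca, hcb] at key
  rw [← hsb]
  have h7 : a - b ≤ (m - x) / Real.sin b := by
    rw [le_div_iff₀ hsbpos]; nlinarith
  linarith

lemma aux_csq_lower {S T u v : ℝ} (hS : 0 < S) (hT : 0 ≤ T) (hD : 0 < S + 2*u + v) :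
    S/(S+T) + (2*T*u - S*(v - T))/(S+T)^2 ≤ (S+u)^2 / (S*(S+2*u+v)) := by
  have hST : 0 < S + T := by linarith
  rw [div_add_div _ _ (ne_of_gt hST) (by positivity), div_le_div_iff₀ (by positivity) (by positivity)]
  nlinarith [sq_nonneg ((S+u)*(S+T) - S*(S+2*u+v)), mul_pos hST hST, hD.le, hS.le,
    mul_nonneg (sq_nonneg ((S+u)*(S+T) - S*(S+2*u+v))) hST.le]


lemma aux_dot_self_nonneg {d : ℕ} (w : Fin d → ℝ) : 0 ≤ w ⬝ᵥ w :=
  Finset.sum_nonneg fun i _ => mul_self_nonneg _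



/-- For `z = ẑ + e` with `ẑ` fixed nonzero, `E[e] = 0`, `E[‖e‖²] = tr P`, and angle
`θ ∈ [0, π/4]` between `z` and `ẑ`, we have
`E[θ] ≤ (1/2) arccos (2‖ẑ‖²/(‖ẑ‖² + tr P) − 1)`, provided the argument of `arccos`
lies in `[−1, 1]`. -/
theorem expected_angle_bound
    {Ω : Type*} [MeasurableSpace Ω] (μ : Measure Ω) [IsProbabilityMeasure μ]
    {d : ℕ} (zhat : Fin d → ℝ) (hzhat : zhat ≠ 0)
    (e : Ω → Fin d → ℝ) (he : Measurable e)
    (z : Ω → Fin d → ℝ) (hz : ∀ ω, z ω = zhat + e ω)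
    (hz_ne : ∀ᵐ ω ∂μ, z ω ≠ 0)
    (P : Matrix (Fin d) (Fin d) ℝ)
    (h_mean : ∀ i, Integrable (fun ω => e ω i) μ ∧ ∫ ω, e ω i ∂μ = 0)
    (h_int_sq : Integrable (fun ω => e ω ⬝ᵥ e ω) μ)
    (h_cov : ∫ ω, e ω ⬝ᵥ e ω ∂μ = P.trace)
    (θ : Ω → ℝ)
    (hθ : ∀ ω, θ ω = Real.arccos
      ((z ω ⬝ᵥ zhat) / (Real.sqrt (z ω ⬝ᵥ z ω) * Real.sqrt (zhat ⬝ᵥ zhat))))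
    (hθ_range : ∀ᵐ ω ∂μ, θ ω ∈ Set.Icc 0 (Real.pi / 4))
    (harg : 2 * (zhat ⬝ᵥ zhat) / (zhat ⬝ᵥ zhat + P.trace) - 1 ∈ Set.Icc (-1 : ℝ) 1) :
    ∫ ω, θ ω ∂μ
      ≤ (1 / 2) * Real.arccos (2 * (zhat ⬝ᵥ zhat) / (zhat ⬝ᵥ zhat + P.trace) - 1) := by
  set S : ℝ := zhat ⬝ᵥ zhat with hSdef
  set T : ℝ := P.trace with hTdef
  set m : ℝ := 2 * S / (S + T) - 1 with hmdef
  -- basic positivity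
  have hS : 0 < S := by
    rcases lt_or_eq_of_le (aux_dot_self_nonneg zhat : 0 ≤ S) with h | h
    · exact h
    · exact absurd (dotProduct_self_eq_zero.mp h.symm) hzhat
  have hT : 0 ≤ T := by
    rw [← h_cov]
    exact integral_nonneg fun ω => aux_dot_self_nonneg (e ω)
  have hST : 0 < S + T := by linarith
  -- abbreviations
  set u : Ω → ℝ := fun ω => e ω ⬝ᵥ zhat with hudef
  set v : Ω → ℝ := fun ω => e ω ⬝ᵥ e ω with hvdef
  set c : Ω → ℝ := fun ω =>
    (z ω ⬝ᵥ zhat) / (Real.sqrt (z ω ⬝ᵥ z ω) * Real.sqrt S) with hcdef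
  set X : Ω → ℝ := fun ω => 2 * c ω ^ 2 - 1 with hXdef
  -- measurability
  have hzm : Measurable z := by
    have : z = fun ω => zhat + e ω := funext hz
    rw [this]
    exact measurable_const.add he
  have hdotm : ∀ (f g : Ω → Fin d → ℝ), Measurable f → Measurable g →
      Measurable (fun ω => f ω ⬝ᵥ g ω) := by
    intro f g hf hg
    simp only [dotProduct]
    exact Finset.measurable_sum _ fun i _ =>
      ((measurable_pi_apply i).comp hf).mul ((measurable_pi_apply i).comp hg)
  have hcm : Measurable c := by
    apply Measurable.div (hdotm z (fun _ => zhat) hzm measurable_const)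
    exact (Real.continuous_sqrt.measurable.comp (hdotm z z hzm hzm)).mul measurable_const
  have hXm : Measurable X := by
    apply Measurable.sub (Measurable.const_mul (hcm.pow measurable_const) 2) measurable_const
  have hθm : Measurable θ := by
    have : θ = fun ω => Real.arccos (c ω) := funext hθ
    rw [this]
    exact Real.continuous_arccos.measurable.comp hcm
  -- key pointwise facts (a.e.)
  have hkey : ∀ᵐ ω ∂μ, θ ω = (1/2) * Real.arccos (X ω) ∧ 0 ≤ X ω ∧ X ω ≤ 1 := by
    filter_upwards [hz_ne, hθ_range] with ω hzne hrange
    have hD : 0 < z ω ⬝ᵥ z ω := by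
      rcases lt_or_eq_of_le (aux_dot_self_nonneg (z ω)) with h | h
      · exact h
      · exact absurd (dotProduct_self_eq_zero.mp h.symm) hzne
    have hCS : (z ω ⬝ᵥ zhat) ^ 2 ≤ (z ω ⬝ᵥ z ω) * S := by
      have := Finset.sum_mul_sq_le_sq_mul_sq Finset.univ (z ω) zhat
      simpa [dotProduct, pow_two, hSdef] using this
    have hc2 : c ω ^ 2 ≤ 1 := by
      rw [hcdef]
      simp only [div_pow, mul_pow, Real.sq_sqrt hD.le, Real.sq_sqrt hS.le]
      exact div_le_one_of_le₀ hCS (by positivity)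
    have hclo : -1 ≤ c ω := by nlinarith
    have hchi : c ω ≤ 1 := by nlinarith
    have hcos : Real.cos (θ ω) = c ω := by
      rw [hθ ω]
      exact Real.cos_arccos hclo hchi
    have hcos2 : Real.cos (2 * θ ω) = X ω := by
      rw [Real.cos_two_mul, hcos]
    have h2θ : 0 ≤ 2 * θ ω ∧ 2 * θ ω ≤ Real.pi / 2 := by
      obtain ⟨h1, h2⟩ := hrange
      constructor <;> linarith
    have harc : Real.arccos (X ω) = 2 * θ ω := by
      rw [← hcos2, Real.arccos_cos h2θ.1 (by linarith [Real.pi_pos, h2θ.2])]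
    refine ⟨by linarith [harc], ?_, ?_⟩
    · rw [← hcos2]
      exact Real.cos_nonneg_of_mem_Icc ⟨by linarith [h2θ.1], h2θ.2⟩
    · rw [← hcos2]; exact Real.cos_le_one _
  -- integrability
  have hθ_int : Integrable θ μ := by
    apply Integrable.mono' (integrable_const Real.pi) hθm.aestronglyMeasurable
    filter_upwards with ω
    rw [Real.norm_eq_abs, hθ ω, abs_of_nonneg (Real.arccos_nonneg _)]
    exact Real.arccos_le_pi _
  have hX_int : Integrable X μ := by
    apply Integrable.mono' (integrable_const 1) hXm.aestronglyMeasurable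
    filter_upwards [hkey] with ω ⟨_, h0, h1⟩
    rw [Real.norm_eq_abs, abs_le]; constructor <;> linarith
  have hu_int : Integrable u μ := by
    rw [hudef]
    simp only [dotProduct]
    exact integrable_finset_sum _ fun i _ => (h_mean i).1.mul_const _
  have hu0 : ∫ ω, u ω ∂μ = 0 := by
    rw [hudef]
    simp only [dotProduct]
    rw [integral_finset_sum _ fun i _ => (h_mean i).1.mul_const _]
    apply Finset.sum_eq_zero
    intro i _
    simp [integral_mul_const, (h_mean i).2]
  have hv0 : ∫ ω, v ω ∂μ = T := h_cov
  -- lower bound on E[X]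
  have hEX : m ≤ ∫ ω, X ω ∂μ := by
    set A : ℝ := 2 * (S/(S+T)) + 2*S*T/(S+T)^2 - 1 with hAdef
    set B : ℝ := 4*T/(S+T)^2 with hBdef
    set C : ℝ := -2*S/(S+T)^2 with hCdef
    have hBC : Integrable (fun ω => B * u ω + C * v ω) μ := by
      exact (hu_int.const_mul B).add (h_int_sq.const_mul C)
    have hL_int : Integrable (fun ω => A + (B * u ω + C * v ω)) μ := by
      exact (integrable_const A).add hBC
    have hLX : ∀ᵐ ω ∂μ, A + (B * u ω + C * v ω) ≤ X ω := by
      filter_upwards [hz_ne] with ω hzne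
      have hD : 0 < z ω ⬝ᵥ z ω := by
        rcases lt_or_eq_of_le (aux_dot_self_nonneg (z ω)) with h | h
        · exact h
        · exact absurd (dotProduct_self_eq_zero.mp h.symm) hzne
      have hzz : z ω ⬝ᵥ zhat = S + u ω := by
        rw [hz ω, add_dotProduct]
      have hDD : z ω ⬝ᵥ z ω = S + 2 * u ω + v ω := by
        simp only [hz ω, add_dotProduct, dotProduct_add,
          dotProduct_comm zhat (e ω), hSdef, hudef, hvdef]
        ring
      have hD' : 0 < S + 2 * u ω + v ω := hDD ▸ hD
      have hc2 : c ω ^ 2 = (S + u ω)^2 / (S * (S + 2 * u ω + v ω)) := by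
        rw [hcdef]
        simp only [div_pow, mul_pow, Real.sq_sqrt hD.le, Real.sq_sqrt hS.le]
        rw [hzz, hDD]
        ring
      have hlow := aux_csq_lower (u := u ω) (v := v ω) hS hT hD'
      rw [← hc2] at hlow
      rw [hXdef]
      simp only
      rw [hAdef, hBdef, hCdef]
      have expand : A + (B * u ω + C * v ω)
          = 2 * (S/(S+T) + (2*T*(u ω) - S*(v ω - T))/(S+T)^2) - 1 := by
        rw [hAdef, hBdef, hCdef]
        field_simp
        ring
      rw [← hAdef, ← hBdef, ← hCdef, expand]
      linarith
    have hIL : ∫ ω, (A + (B * u ω + C * v ω)) ∂μ = m := by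
      rw [integral_add (integrable_const A) hBC,
        integral_add (hu_int.const_mul B) (h_int_sq.const_mul C),
        integral_const_mul, integral_const_mul, hu0, hv0, integral_const]
      simp only [measure_univ, probReal_univ, smul_eq_mul, one_mul, mul_zero, add_zero]
      rw [hAdef, hCdef, hmdef]
      field_simp
      ring
    calc m = ∫ ω, (A + (B * u ω + C * v ω)) ∂μ := hIL.symm
      _ ≤ ∫ ω, X ω ∂μ := integral_mono_ae hL_int hX_int hLX
  -- case analysis on m
  rcases le_or_gt m 0 with hm0 | hm0
  · -- m ≤ 0 : arccos m ≥ π/2, and E θ ≤ π/4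
    have h1 : ∫ ω, θ ω ∂μ ≤ Real.pi / 4 := by
      have := integral_mono_ae hθ_int (integrable_const (Real.pi / 4))
        (hθ_range.mono fun ω h => h.2)
      simpa [integral_const, measure_univ] using this
    have h2 : Real.pi / 2 ≤ Real.arccos m := by
      by_contra h
      push_neg at h
      rw [Real.arccos_lt_pi_div_two] at h
      linarith
    linarith
  · rcases eq_or_lt_of_le harg.2 with hm1 | hm1
    · -- m = 1 : then T = 0, e = 0 a.e., θ = 0 a.e.
      have hT0 : T = 0 := by
        have h2' : 2*S/(S+T) = 2 := by
          have h := hm1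
          rw [hmdef] at h
          linarith
        rw [div_eq_iff (ne_of_gt hST)] at h2'
        linarith
      have hv_zero : ∀ᵐ ω ∂μ, e ω ⬝ᵥ e ω = 0 := by
        have : ∫ ω, e ω ⬝ᵥ e ω ∂μ = 0 := by rw [h_cov]; exact hT0
        have h := (integral_eq_zero_iff_of_nonneg_ae
          (Filter.Eventually.of_forall fun ω => aux_dot_self_nonneg (e ω)) h_int_sq).mp this
        filter_upwards [h] with ω hω using hω
      have hθ0 : ∀ᵐ ω ∂μ, θ ω = 0 := by
        filter_upwards [hv_zero] with ω hω
        have he0 : e ω = 0 := dotProduct_self_eq_zero.mp hω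
        have hzω : z ω = zhat := by rw [hz ω, he0, add_zero]
        rw [hθ ω, hzω, ← hSdef, Real.mul_self_sqrt hS.le, div_self (ne_of_gt hS),
          Real.arccos_one]
      have : ∫ ω, θ ω ∂μ = 0 := by
        rw [integral_congr_ae hθ0, integral_zero]
      rw [this]
      exact mul_nonneg (by norm_num) (Real.arccos_nonneg m)
    · -- 0 < m < 1 : tangent-line argument
      have hs : 0 < Real.sqrt (1 - m^2) := Real.sqrt_pos.mpr (by nlinarith)
      have hbound : ∀ᵐ ω ∂μ, θ ω ≤ (1/2) * Real.arccos m
          + (1/(2 * Real.sqrt (1 - m^2))) * (m - X ω) := by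
        filter_upwards [hkey] with ω ⟨hθeq, hX0, hX1⟩
        have := aux_arccos_tangent hX0 hX1 hm0 hm1
        rw [hθeq]
        rw [div_eq_mul_inv] at this
        have h2 : (1/(2 * Real.sqrt (1 - m^2))) * (m - X ω)
            = (1/2) * ((m - X ω) * (Real.sqrt (1 - m^2))⁻¹) := by
          field_simp
        rw [h2]
        linarith
      have hsub : Integrable (fun ω => m - X ω) μ := by
        exact (integrable_const m).sub hX_int
      have h4a : Integrable (fun ω => (1/(2 * Real.sqrt (1 - m^2))) * (m - X ω)) μ :=
        hsub.const_mul _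
      have hrhs_int : Integrable (fun ω => (1/2) * Real.arccos m
          + (1/(2 * Real.sqrt (1 - m^2))) * (m - X ω)) μ := by
        exact (integrable_const _).add h4a
      have h3 := integral_mono_ae hθ_int hrhs_int hbound
      have h4 : ∫ ω, ((1/2) * Real.arccos m
          + (1/(2 * Real.sqrt (1 - m^2))) * (m - X ω)) ∂μ
          = (1/2) * Real.arccos m + (1/(2 * Real.sqrt (1 - m^2))) * (m - ∫ ω, X ω ∂μ) := by
        rw [integral_add (integrable_const _) h4a,
          integral_const_mul, integral_const_mul, integral_sub (integrable_const m) hX_int,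
          integral_const, integral_const]
        simp [measure_univ]
      rw [h4] at h3
      have h5 : (1/(2 * Real.sqrt (1 - m^2))) * (m - ∫ ω, X ω ∂μ) ≤ 0 := by
        apply mul_nonpos_of_nonneg_of_nonpos
        · positivity
        · linarith
      linarith
end
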